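/- Let G be a finite group, H ≤ G, and let u_H ∈ B(H) ⊗ ℚ be the primitive idempotent of the rational Burnside ring supported at H (i.e. with mark 1 at H and mark 0 at all other subgroups of H). Set u^G_H := Ind^G_H(u_H) ∈ B(G) ⊗ ℚ. Then u^G_H · u^G_H = |N_G(H)/H| · u^G_H. -/

import Mathlib

open Pointwise Finsupp

noncomputable section

/-- Conjugacy classes of subgroups of `G`. -/
def SubgroupConj (G : Type*) [Group G] : Type _ :=
  Quotient (MulAction.orbitRel (ConjAct G) (Subgroup G))

variable {G : Type*} [Group G]

/-- The conjugacy class of a subgroup. -/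
def Subgroup.toConj (K : Subgroup G) : SubgroupConj G :=
  Quotient.mk (MulAction.orbitRel (ConjAct G) (Subgroup G)) K

/-- A representative of a conjugacy class of subgroups. -/
def SubgroupConj.rep (c : SubgroupConj G) : Subgroup G := Quotient.out c

instance : DecidableEq (SubgroupConj G) := Classical.decEq _

instance [Finite G] : Finite (Subgroup G) :=
  Finite.of_injective (fun H => (H : Set G)) fun _ _ h => SetLike.ext' h

instance [Finite G] : Finite (SubgroupConj G) := Quotient.finite _

noncomputable instance [Finite G] : Fintype (SubgroupConj G) := Fintype.ofFinite _

instance [Finite G] (s t : Set G) : Finite (DoubleCoset.Quotient s t) :=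
  Quotient.finite _

noncomputable instance [Finite G] (s t : Set G) : Fintype (DoubleCoset.Quotient s t) :=
  Fintype.ofFinite _

/-- The conjugate subgroup `g K g⁻¹`. -/
def conjSub (g : G) (K : Subgroup G) : Subgroup G :=
  Subgroup.map (MulAut.conj g).toMonoidHom K

/-- The rational Burnside ring of `G`, as the free `ℚ`-module on the classes `[G/Γ]`. -/
abbrev BQ (G : Type*) [Group G] := SubgroupConj G →₀ ℚ

variable [Finite G]

/-- The double coset formula for the product of two basis elements
`⟨Γ⟩⟨Γ'⟩ = Σ_{g ∈ Γ'\G\Γ} ⟨Γ ∩ g⁻¹ Γ' g⟩`. -/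
def basisMul (c d : SubgroupConj G) : BQ G :=
  ∑ q : DoubleCoset.Quotient (d.rep : Set G) (c.rep : Set G),
    Finsupp.single (Subgroup.toConj (c.rep ⊓ conjSub (Quotient.out q)⁻¹ d.rep)) 1

/-- The multiplication of the Burnside ring in the basis `[G/Γ]`. -/
def mulB (x y : BQ G) : BQ G :=
  x.sum fun c a => y.sum fun d b => (a * b) • basisMul c d

/-- The unit `[G/G]` of the Burnside ring. -/
def oneB : BQ G := Finsupp.single (Subgroup.toConj (⊤ : Subgroup G)) 1

/-- Induction along an (injective) group homomorphism. -/
def indF {H : Type*} [Group H] (f : H →* G) (y : BQ H) : BQ G :=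
  y.sum fun c a => Finsupp.single (Subgroup.toConj (c.rep.map f)) a

/-- Restriction of the basis element `[G/Γ]` along `f : H →* G`:
`Res [G/Γ] = Σ_{g ∈ f(H)\G/Γ} [H / f⁻¹(g Γ g⁻¹)]`. -/
def resBasis {H : Type*} [Group H] (f : H →* G) (c : SubgroupConj G) : BQ H :=
  ∑ q : DoubleCoset.Quotient (f.range : Set G) (c.rep : Set G),
    Finsupp.single (Subgroup.toConj ((conjSub (Quotient.out q) c.rep).comap f)) 1

/-- Restriction along a group homomorphism. -/
def resF {H : Type*} [Group H] (f : H →* G) (x : BQ G) : BQ H :=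
  x.sum fun c a => a • resBasis f c

/-- The mark of the basis element `[G/Γ]` at (the class of) `Δ`: the number of
`Δ`-fixed points of `G/Γ`. -/
def markBasis (c d : SubgroupConj G) : ℚ :=
  (Nat.card {x : G ⧸ c.rep // ∀ k ∈ d.rep, k • x = x} : ℚ)

/-- The mark homomorphism, in the basis `[G/Γ]`. -/
def markMap (x : BQ G) : SubgroupConj G → ℚ :=
  fun d => x.sum fun c a => a * markBasis c d

/-- `x` is the primitive idempotent of `B(G) ⊗ ℚ` supported at the full subgroup:
its mark at `G` is `1` and its marks at all proper subgroups vanish. -/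
def IsTopIdem (x : BQ G) : Prop :=
  markMap x = fun d => if d = Subgroup.toConj (⊤ : Subgroup G) then 1 else 0

/-- `|N_G(H)/H|`. -/
def nuG (H : Subgroup G) : ℕ :=
  Nat.card ((Subgroup.normalizer (H : Set G)) ⧸ H.subgroupOf (Subgroup.normalizer (H : Set G)))


/-- The conjugation isomorphism `H → gHg⁻¹`, as a monoid homomorphism. -/
def conjHom (g : G) (H : Subgroup G) : ↥H →* ↥(conjSub g H) :=
  ((MulAut.conj g).toMonoidHom.comp H.subtype).codRestrict (conjSub g H)
    (fun h => Subgroup.mem_map_of_mem _ h.2)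

/-- Conjugation by an element of the normalizer of `H`, as an endomorphism of `H`. -/
def normConjHom (H : Subgroup G) (n : G) (hn : n ∈ Subgroup.normalizer (H : Set G)) : ↥H →* ↥H :=
  ((MulAut.conj n).toMonoidHom.comp H.subtype).codRestrict H
    (fun h => by simpa using (Subgroup.mem_normalizer_iff.mp hn ↑h).mp h.2)

section Aux1

variable {G : Type*} [Group G]

lemma mem_conjSub {g a : G} {K : Subgroup G} : a ∈ conjSub g K ↔ g⁻¹ * a * g ∈ K := by
  constructor
  · rintro ⟨k, hk, rfl⟩
    simpa [mul_assoc] using hk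
  · intro h
    exact ⟨g⁻¹ * a * g, h, by simp [mul_assoc]⟩

lemma conjSub_conjSub (g h : G) (K : Subgroup G) :
    conjSub g (conjSub h K) = conjSub (g * h) K := by
  ext a
  simp [mem_conjSub, mul_assoc]

lemma conjSub_one (K : Subgroup G) : conjSub 1 K = K := by
  ext a; simp [mem_conjSub]

lemma conjSub_inv_conjSub (g : G) (K : Subgroup G) : conjSub g⁻¹ (conjSub g K) = K := by
  rw [conjSub_conjSub, inv_mul_cancel, conjSub_one]

lemma conjSub_top (g : G) : conjSub g (⊤ : Subgroup G) = ⊤ := by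
  ext a; simp [mem_conjSub]

lemma conjSub_mem (g : G) {K : Subgroup G} (hg : g ∈ K) : conjSub g K = K := by
  ext a
  simp only [mem_conjSub]
  constructor
  · intro h
    have := K.mul_mem (K.mul_mem hg h) (K.inv_mem hg)
    group at this
    simpa using this
  · intro h
    exact K.mul_mem (K.mul_mem (K.inv_mem hg) h) hg

lemma card_conjSub (g : G) (K : Subgroup G) : Nat.card (conjSub g K) = Nat.card K :=
  (Nat.card_congr (Subgroup.equivMapOfInjective K (MulAut.conj g).toMonoidHom
    (MulAut.conj g).injective).toEquiv).symm

lemma toConj_conjSub (g : G) (K : Subgroup G) :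
    Subgroup.toConj (conjSub g K) = Subgroup.toConj K := by
  apply Quotient.sound
  refine ⟨ConjAct.toConjAct g, ?_⟩
  ext a
  rw [Subgroup.mem_pointwise_smul_iff_inv_smul_mem]
  simp [mem_conjSub, ConjAct.smul_def, mul_assoc]

lemma toConj_rep (c : SubgroupConj G) : Subgroup.toConj c.rep = c := Quotient.out_eq c

lemma exists_conjSub_rep (K : Subgroup G) :
    ∃ g : G, conjSub g K = (Subgroup.toConj K).rep := by
  have h : (Subgroup.toConj K).rep ∈ MulAction.orbit (ConjAct G) K :=
    Quotient.exact (toConj_rep (Subgroup.toConj K))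
  obtain ⟨γ, hγ⟩ := h
  refine ⟨ConjAct.ofConjAct γ, ?_⟩
  rw [← hγ]
  ext a
  rw [Subgroup.mem_pointwise_smul_iff_inv_smul_mem]
  simp [mem_conjSub, ConjAct.smul_def, mul_assoc]

lemma toConj_eq_top_iff {K : Subgroup G} :
    Subgroup.toConj K = Subgroup.toConj (⊤ : Subgroup G) ↔ K = ⊤ := by
  constructor
  · intro h
    have h2 : K ∈ MulAction.orbit (ConjAct G) (⊤ : Subgroup G) := Quotient.exact h
    obtain ⟨γ, hγ⟩ := h2
    rw [← hγ]
    ext a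
    rw [Subgroup.mem_pointwise_smul_iff_inv_smul_mem]
    simp
  · rintro rfl; rfl

/-- The set of `Δ`-fixed points in `G ⧸ Γ`. -/
def FixQ (Δ Γ : Subgroup G) : Type _ := {x : G ⧸ Γ // ∀ k ∈ Δ, k • x = x}

instance [Finite G] (Δ Γ : Subgroup G) : Finite (FixQ Δ Γ) :=
  Subtype.finite

lemma markBasis_eq_card [Finite G] (c d : SubgroupConj G) :
    markBasis c d = (Nat.card (FixQ d.rep c.rep) : ℚ) := rfl

end Aux1
section Aux2

variable {G : Type*} [Group G]

/-- Transport `Δ`-fixed points along an equivariant equiv. -/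
def fixEquivOfEquivariant {α β : Type*} [MulAction G α] [MulAction G β]
    (e : α ≃ β) (he : ∀ (k : G) (x : α), e (k • x) = k • e x) (Δ : Subgroup G) :
    {x : α // ∀ k ∈ Δ, k • x = x} ≃ {y : β // ∀ k ∈ Δ, k • y = y} :=
  Equiv.subtypeEquiv e (by
    intro x
    constructor
    · intro hx k hk
      rw [← he, hx k hk]
    · intro hx k hk
      apply e.injective
      rw [he, hx k hk])

/-- Right translation `G ⧸ Γ ≃ G ⧸ gΓg⁻¹`. -/
def quotConjEquiv (g : G) (Γ : Subgroup G) : G ⧸ Γ ≃ G ⧸ conjSub g Γ where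
  toFun := Quotient.map' (fun a => a * g⁻¹) (by
    intro a b h
    rw [QuotientGroup.leftRel_apply] at h ⊢
    rw [mem_conjSub]
    group
    simpa using h)
  invFun := Quotient.map' (fun a => a * g) (by
    intro a b h
    rw [QuotientGroup.leftRel_apply] at h ⊢
    rw [mem_conjSub] at h
    group at h ⊢
    simpa using h)
  left_inv := by
    intro x
    induction x using Quotient.inductionOn' with
    | h a => simp [Quotient.map'_mk'']
  right_inv := by
    intro x
    induction x using Quotient.inductionOn' with
    | h a => simp [Quotient.map'_mk'']

lemma quotConjEquiv_mk (g : G) (Γ : Subgroup G) (a : G) :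
    quotConjEquiv g Γ (QuotientGroup.mk a) = QuotientGroup.mk (a * g⁻¹) := rfl

lemma quotConjEquiv_equivariant (g : G) (Γ : Subgroup G) (k : G) (x : G ⧸ Γ) :
    quotConjEquiv g Γ (k • x) = k • quotConjEquiv g Γ x := by
  induction x using Quotient.inductionOn' with
  | h a =>
    show quotConjEquiv g Γ (k • QuotientGroup.mk a) = k • quotConjEquiv g Γ (QuotientGroup.mk a)
    rw [MulAction.Quotient.smul_mk, smul_eq_mul, quotConjEquiv_mk, quotConjEquiv_mk,
      MulAction.Quotient.smul_mk, smul_eq_mul, mul_assoc]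

/-- Fixed points are invariant under conjugating `Γ`. -/
def fixQConjEquiv (g : G) (Δ Γ : Subgroup G) : FixQ Δ Γ ≃ FixQ Δ (conjSub g Γ) :=
  fixEquivOfEquivariant (quotConjEquiv g Γ) (quotConjEquiv_equivariant g Γ) Δ

/-- Fixed points are invariant under conjugating `Δ`. -/
def fixQConjEquiv' (g : G) (Δ Γ : Subgroup G) : FixQ Δ Γ ≃ FixQ (conjSub g Δ) Γ := by
  refine Equiv.subtypeEquiv (MulAction.toPerm g) ?_
  intro x
  constructor
  · intro hx k hk
    rw [mem_conjSub] at hk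
    show k • g • x = g • x
    rw [smul_smul]
    have h1 : (k * g) • x = (g * (g⁻¹ * k * g)) • x := by congr 1; group
    rw [h1, ← smul_smul, hx _ hk]
  · intro hx k hk
    have h0 : g * k * g⁻¹ ∈ conjSub g Δ := by
      rw [mem_conjSub]
      group
      simpa using hk
    have := hx (g * k * g⁻¹) h0
    show k • x = x
    have h2 : (g * k * g⁻¹) • (MulAction.toPerm g) x = g • k • x := by
      show (g * k * g⁻¹) • g • x = _
      rw [smul_smul, smul_smul]
      congr 1
      group
    rw [h2] at this
    exact smul_left_cancel g this

variable [Finite G]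

lemma card_fixQ_conj (g : G) (Δ Γ : Subgroup G) :
    Nat.card (FixQ Δ (conjSub g Γ)) = Nat.card (FixQ Δ Γ) :=
  (Nat.card_congr (fixQConjEquiv g Δ Γ)).symm

lemma card_fixQ_conj' (g : G) (Δ Γ : Subgroup G) :
    Nat.card (FixQ (conjSub g Δ) Γ) = Nat.card (FixQ Δ Γ) :=
  (Nat.card_congr (fixQConjEquiv' g Δ Γ)).symm

lemma markBasis_toConj (W : Subgroup G) (d : SubgroupConj G) :
    markBasis (Subgroup.toConj W) d = (Nat.card (FixQ d.rep W) : ℚ) := by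
  obtain ⟨g, hg⟩ := exists_conjSub_rep W
  rw [markBasis_eq_card, ← hg, card_fixQ_conj]

lemma markBasis_toConj' (c : SubgroupConj G) (Δ : Subgroup G) :
    markBasis c (Subgroup.toConj Δ) = (Nat.card (FixQ Δ c.rep) : ℚ) := by
  obtain ⟨g, hg⟩ := exists_conjSub_rep Δ
  rw [markBasis_eq_card, ← hg, card_fixQ_conj']

end Aux2
section Aux3

set_option linter.unusedSectionVars false

variable {G : Type*} [Group G]

/-- The subgroup attached to a double coset. -/
def dcW (Γ Γ' : Subgroup G) (q : DoubleCoset.Quotient (Γ' : Set G) (Γ : Set G)) : Subgroup G :=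
  Γ ⊓ conjSub (Quotient.out q)⁻¹ Γ'

lemma dcW_le (Γ Γ' : Subgroup G) (q) : dcW Γ Γ' q ≤ Γ := inf_le_left

/-- First projection. -/
def dcP1 (Γ Γ' : Subgroup G) (q) : G ⧸ dcW Γ Γ' q → G ⧸ Γ :=
  Quotient.map' id (by
    intro a b h
    rw [QuotientGroup.leftRel_apply] at h ⊢
    exact dcW_le Γ Γ' q h)

/-- Second projection. -/
def dcP2 (Γ Γ' : Subgroup G) (q) : G ⧸ dcW Γ Γ' q → G ⧸ Γ' :=
  Quotient.map' (· * (Quotient.out q)⁻¹) (by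
    intro a b h
    rw [QuotientGroup.leftRel_apply] at h ⊢
    have h2 : a⁻¹ * b ∈ conjSub (Quotient.out q)⁻¹ Γ' := h.2
    rw [mem_conjSub] at h2
    group at h2 ⊢
    simpa using h2)

/-- The disjoint-union-of-double-cosets map. -/
def dcF (Γ Γ' : Subgroup G) : (Σ q, G ⧸ dcW Γ Γ' q) → (G ⧸ Γ) × (G ⧸ Γ') :=
  fun w => (dcP1 Γ Γ' w.1 w.2, dcP2 Γ Γ' w.1 w.2)

lemma dcF_mk (Γ Γ' : Subgroup G) (q) (a : G) :
    dcF Γ Γ' ⟨q, QuotientGroup.mk a⟩ =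
      (QuotientGroup.mk a, QuotientGroup.mk (a * (Quotient.out q)⁻¹)) := rfl

lemma dcF_injective (Γ Γ' : Subgroup G) : Function.Injective (dcF Γ Γ') := by
  rintro ⟨q, z⟩ ⟨q', z'⟩ h
  induction z using Quotient.inductionOn' with
  | h a =>
  induction z' using Quotient.inductionOn' with
  | h b =>
  rw [show (Quotient.mk'' a : G ⧸ dcW Γ Γ' q) = QuotientGroup.mk a from rfl] at h ⊢
  rw [show (Quotient.mk'' b : G ⧸ dcW Γ Γ' q') = QuotientGroup.mk b from rfl] at h ⊢
  rw [dcF_mk, dcF_mk, Prod.mk.injEq] at h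
  obtain ⟨h1, h2⟩ := h
  rw [QuotientGroup.eq] at h1 h2
  have hβ : Quotient.out q * (a⁻¹ * b) * (Quotient.out q')⁻¹ ∈ Γ' := by
    have := h2
    group at this ⊢
    simpa using this
  have hq : q' = q := by
    have h3 : DoubleCoset.mk Γ' Γ (Quotient.out q') = DoubleCoset.mk Γ' Γ (Quotient.out q) := by
      rw [DoubleCoset.eq]
      refine ⟨Quotient.out q * (a⁻¹ * b) * (Quotient.out q')⁻¹, hβ, (a⁻¹ * b)⁻¹,
        Γ.inv_mem h1, ?_⟩
      group
    rw [DoubleCoset.out_eq', DoubleCoset.out_eq'] at h3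
    exact h3
  subst hq
  have hc : a⁻¹ * b ∈ conjSub (Quotient.out q')⁻¹ Γ' := by
    rw [mem_conjSub]
    group at hβ ⊢
    simpa using hβ
  have hz : (QuotientGroup.mk a : G ⧸ dcW Γ Γ' q') = QuotientGroup.mk b :=
    QuotientGroup.eq.mpr (Subgroup.mem_inf.mpr ⟨h1, hc⟩)
  rw [hz]

lemma dcF_surjective (Γ Γ' : Subgroup G) : Function.Surjective (dcF Γ Γ') := by
  rintro ⟨x, y⟩
  induction x using Quotient.inductionOn' with
  | h a =>
  induction y using Quotient.inductionOn' with
  | h b =>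
  obtain ⟨h, k, hh, hk, hout⟩ := DoubleCoset.mk_out_eq_mul Γ' Γ (b⁻¹ * a)
  refine ⟨⟨DoubleCoset.mk Γ' Γ (b⁻¹ * a), QuotientGroup.mk (a * k)⟩, ?_⟩
  rw [show (Quotient.mk'' a : G ⧸ Γ) = QuotientGroup.mk a from rfl,
    show (Quotient.mk'' b : G ⧸ Γ') = QuotientGroup.mk b from rfl, dcF_mk, Prod.mk.injEq]
  constructor
  · rw [QuotientGroup.eq]
    simpa using hk
  · rw [QuotientGroup.eq, hout]
    have : (a * k * (h * (b⁻¹ * a) * k)⁻¹)⁻¹ * b = h := by group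
    rw [this]
    exact hh

lemma dcF_equivariant (Γ Γ' : Subgroup G) (q) (k : G) (z : G ⧸ dcW Γ Γ' q) :
    dcF Γ Γ' ⟨q, k • z⟩ = k • dcF Γ Γ' ⟨q, z⟩ := by
  induction z using Quotient.inductionOn' with
  | h a =>
  rw [show (Quotient.mk'' a : G ⧸ dcW Γ Γ' q) = QuotientGroup.mk a from rfl]
  rw [MulAction.Quotient.smul_mk, smul_eq_mul, dcF_mk, dcF_mk, Prod.smul_mk,
    MulAction.Quotient.smul_mk, MulAction.Quotient.smul_mk, smul_eq_mul, smul_eq_mul, mul_assoc]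

/-- The fixed-point version of `dcF`. -/
def dcFix (Δ Γ Γ' : Subgroup G) : (Σ q, FixQ Δ (dcW Γ Γ' q)) → FixQ Δ Γ × FixQ Δ Γ' :=
  fun w =>
    (⟨(dcF Γ Γ' ⟨w.1, w.2.1⟩).1, fun k hk => by
        have h1 : dcF Γ Γ' ⟨w.1, k • w.2.1⟩ = k • dcF Γ Γ' ⟨w.1, w.2.1⟩ :=
          dcF_equivariant Γ Γ' w.1 k w.2.1
        rw [w.2.2 k hk] at h1
        exact (congrArg Prod.fst h1).symm⟩,
     ⟨(dcF Γ Γ' ⟨w.1, w.2.1⟩).2, fun k hk => by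
        have h1 : dcF Γ Γ' ⟨w.1, k • w.2.1⟩ = k • dcF Γ Γ' ⟨w.1, w.2.1⟩ :=
          dcF_equivariant Γ Γ' w.1 k w.2.1
        rw [w.2.2 k hk] at h1
        exact (congrArg Prod.snd h1).symm⟩)

lemma dcFix_bijective (Δ Γ Γ' : Subgroup G) : Function.Bijective (dcFix Δ Γ Γ') := by
  constructor
  · rintro ⟨q, z, hz⟩ ⟨q', z', hz'⟩ h
    rw [Prod.mk.injEq] at h
    have hF : dcF Γ Γ' ⟨q, z⟩ = dcF Γ Γ' ⟨q', z'⟩ := by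
      have h1 := congrArg Subtype.val h.1
      have h2 := congrArg Subtype.val h.2
      exact Prod.ext h1 h2
    have := dcF_injective Γ Γ' hF
    obtain ⟨hq, hzz⟩ := Sigma.ext_iff.mp this
    subst hq
    have : z = z' := eq_of_heq hzz
    subst this
    rfl
  · rintro ⟨⟨x, hx⟩, ⟨y, hy⟩⟩
    obtain ⟨⟨q, z⟩, hF⟩ := dcF_surjective Γ Γ' (x, y)
    have hz : ∀ k ∈ Δ, k • z = z := by
      intro k hk
      have h1 : dcF Γ Γ' ⟨q, k • z⟩ = k • dcF Γ Γ' ⟨q, z⟩ := dcF_equivariant Γ Γ' q k z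
      rw [hF, Prod.smul_mk, hx k hk, hy k hk, ← hF] at h1
      have := dcF_injective Γ Γ' h1
      obtain ⟨hq, hzz⟩ := Sigma.ext_iff.mp this
      exact eq_of_heq hzz
    refine ⟨⟨q, z, hz⟩, ?_⟩
    refine Prod.ext ?_ ?_
    · apply Subtype.ext
      exact congrArg Prod.fst hF
    · apply Subtype.ext
      exact congrArg Prod.snd hF

lemma nat_card_sigma {ι : Type*} [Fintype ι] (f : ι → Type*) [∀ i, Finite (f i)] :
    Nat.card (Σ i, f i) = ∑ i, Nat.card (f i) := by
  letI := fun i => Fintype.ofFinite (f i)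
  simp only [Nat.card_eq_fintype_card]
  exact Fintype.card_sigma

variable [Finite G]

lemma card_fix_mul_card_fix (Δ Γ Γ' : Subgroup G) :
    Nat.card (FixQ Δ Γ) * Nat.card (FixQ Δ Γ') =
      ∑ q : DoubleCoset.Quotient (Γ' : Set G) (Γ : Set G), Nat.card (FixQ Δ (dcW Γ Γ' q)) := by
  rw [← Nat.card_prod, ← Nat.card_congr (Equiv.ofBijective _ (dcFix_bijective Δ Γ Γ'))]
  exact nat_card_sigma _

end Aux3
section Aux4

set_option linter.unusedSectionVars false

variable {G : Type*} [Group G] [Finite G]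

/-- The mark at `d` as a linear map. -/
def markLin (d : SubgroupConj G) : BQ G →ₗ[ℚ] ℚ :=
  Finsupp.linearCombination ℚ (fun c => markBasis c d)

lemma markMap_eq (x : BQ G) (d : SubgroupConj G) : markMap x d = markLin d x := by
  simp only [markMap, markLin, Finsupp.linearCombination_apply, smul_eq_mul]

lemma markLin_single (c : SubgroupConj G) (a : ℚ) (d : SubgroupConj G) :
    markLin d (Finsupp.single c a) = a * markBasis c d := by
  simp [markLin, Finsupp.linearCombination_single, smul_eq_mul]

lemma markLin_basisMul (c c' e : SubgroupConj G) :
    markLin e (basisMul c c') = markBasis c e * markBasis c' e := by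
  rw [basisMul, map_sum]
  have h1 : ∀ q : DoubleCoset.Quotient (c'.rep : Set G) (c.rep : Set G),
      markLin e (Finsupp.single (Subgroup.toConj (c.rep ⊓ conjSub (Quotient.out q)⁻¹ c'.rep)) 1)
        = (Nat.card (FixQ e.rep (dcW c.rep c'.rep q)) : ℚ) := by
    intro q
    rw [markLin_single, one_mul, markBasis_toConj]
    rfl
  rw [Finset.sum_congr rfl (fun q _ => h1 q)]
  rw [markBasis_eq_card, markBasis_eq_card, ← Nat.cast_mul, card_fix_mul_card_fix]
  push_cast
  rfl

lemma markMap_mulB (x y : BQ G) (d : SubgroupConj G) :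
    markMap (mulB x y) d = markMap x d * markMap y d := by
  have expand : markMap (mulB x y) d
      = x.sum fun c a => y.sum fun c' b => (a * b) * (markBasis c d * markBasis c' d) := by
    rw [markMap_eq, mulB, map_finsuppSum]
    apply Finsupp.sum_congr
    intro c _
    rw [map_finsuppSum]
    apply Finsupp.sum_congr
    intro c' _
    rw [map_smul, smul_eq_mul, markLin_basisMul]
  rw [expand]
  simp only [markMap]
  rw [Finsupp.sum_mul]
  apply Finsupp.sum_congr
  intro c _
  rw [Finsupp.mul_sum]
  apply Finsupp.sum_congr
  intro c' _
  ring

lemma markMap_smul (a : ℚ) (x : BQ G) (d : SubgroupConj G) :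
    markMap (a • x) d = a * markMap x d := by
  rw [markMap_eq, map_smul, smul_eq_mul, markMap_eq]

lemma markMap_zero_imp (x : BQ G) (hx : ∀ d, markMap x d = 0) : x = 0 := by
  by_contra h
  obtain ⟨c, hc, hmax⟩ := x.support.exists_max_image (fun c => Nat.card c.rep)
    (Finsupp.support_nonempty_iff.mpr h)
  have h0 := hx c
  rw [markMap, Finsupp.sum, Finset.sum_eq_single_of_mem c hc] at h0
  · have hpos : markBasis c c ≠ 0 := by
      rw [markBasis_eq_card]
      have : Nonempty (FixQ c.rep c.rep) := by
        refine ⟨⟨QuotientGroup.mk 1, fun k hk => ?_⟩⟩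
        rw [MulAction.Quotient.smul_mk, smul_eq_mul, mul_one, QuotientGroup.eq]
        simpa using c.rep.inv_mem hk
      have := Nat.card_pos (α := FixQ c.rep c.rep)
      exact_mod_cast this.ne'
    have := mul_eq_zero.mp h0
    rcases this with h1 | h1
    · exact (Finsupp.mem_support_iff.mp hc) h1
    · exact hpos h1
  · intro c' hc' hne
    rcases eq_or_ne (markBasis c' c) 0 with hb | hb
    · rw [hb, mul_zero]
    exfalso
    have hne0 : Nat.card (FixQ c.rep c'.rep) ≠ 0 := by
      rw [markBasis_eq_card] at hb
      exact_mod_cast hb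
    obtain ⟨x0⟩ := (Nat.card_ne_zero.mp hne0).1
    set a := Quotient.out x0.val with ha
    have hle : conjSub a⁻¹ c.rep ≤ c'.rep := by
      intro m hm
      rw [mem_conjSub] at hm
      have hm' : a * m * a⁻¹ ∈ c.rep := by
        group at hm ⊢
        simpa using hm
      have hfix := x0.2 (a * m * a⁻¹) hm'
      rw [← QuotientGroup.out_eq' x0.val, MulAction.Quotient.smul_mk, smul_eq_mul,
        QuotientGroup.eq, ← ha] at hfix
      have h6 : (a * m * a⁻¹ * a)⁻¹ * a = m⁻¹ := by group
      rw [h6] at hfix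
      exact c'.rep.inv_mem_iff.mp hfix
    have hcard1 : Nat.card c.rep ≤ Nat.card c'.rep := by
      have := Subgroup.card_le_of_le hle
      rwa [card_conjSub] at this
    have heq : conjSub a⁻¹ c.rep = c'.rep := by
      apply Subgroup.eq_of_le_of_card_ge hle
      rw [card_conjSub]
      exact le_trans (hmax c' hc') (le_of_eq rfl)
    have : c' = c := by
      rw [← toConj_rep c', ← heq, toConj_conjSub, toConj_rep]
    exact hne this

end Aux4
section Aux5

set_option linter.unusedSectionVars false

variable {G : Type*} [Group G]

lemma fix_out_conj {Δ Γ : Subgroup G} (y : FixQ Δ Γ) {δ : G} (hδ : δ ∈ Δ) :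
    (Quotient.out y.val)⁻¹ * δ * Quotient.out y.val ∈ Γ := by
  have h1 := y.2 δ⁻¹ (Δ.inv_mem hδ)
  rw [← QuotientGroup.out_eq' y.val, MulAction.Quotient.smul_mk, smul_eq_mul,
    QuotientGroup.eq] at h1
  have h2 : (δ⁻¹ * Quotient.out y.val)⁻¹ * Quotient.out y.val
      = (Quotient.out y.val)⁻¹ * δ * Quotient.out y.val := by group
  rwa [h2] at h1

/-- The subgroup of `H` attached to a fixed coset in `G ⧸ H`. -/
def indW (H Δ : Subgroup G) (y : FixQ Δ H) : Subgroup ↥H :=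
  (conjSub (Quotient.out y.val)⁻¹ Δ).comap H.subtype

/-- The translated inclusion `H ⧸ K → G ⧸ (K.map H.subtype)`. -/
def indMap (H : Subgroup G) (K : Subgroup ↥H) (g : G) :
    (↥H ⧸ K) → G ⧸ K.map H.subtype :=
  Quotient.map' (fun h => g * (h : G)) (by
    intro h h' hr
    rw [QuotientGroup.leftRel_apply] at hr ⊢
    have heq : (g * (h : G))⁻¹ * (g * (h' : G)) = ((h⁻¹ * h' : ↥H) : G) := by
      push_cast
      group
    rw [heq]
    exact Subgroup.mem_map_of_mem _ hr)

lemma indMap_mk (H : Subgroup G) (K : Subgroup ↥H) (g : G) (h : ↥H) :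
    indMap H K g (QuotientGroup.mk h) = QuotientGroup.mk (g * (h : G)) := rfl

/-- The pieces-of-induced-set map. -/
def indF2 (H Δ : Subgroup G) (K : Subgroup ↥H) :
    (Σ y : FixQ Δ H, FixQ (indW H Δ y) K) → FixQ Δ (K.map H.subtype) := by
  refine fun w => ⟨indMap H K (Quotient.out w.1.val) w.2.val, ?_⟩
  obtain ⟨y, z, hz⟩ := w
  induction z using Quotient.inductionOn' with
  | h h =>
  intro δ hδ
  set g := Quotient.out y.val with hg
  show δ • indMap H K g (QuotientGroup.mk h) = indMap H K g (QuotientGroup.mk h)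
  rw [indMap_mk, MulAction.Quotient.smul_mk, smul_eq_mul, QuotientGroup.eq]
  have hμ : g⁻¹ * δ * g ∈ H := fix_out_conj y hδ
  set lam : ↥H := ⟨g⁻¹ * δ * g, hμ⟩ with hlam
  have hlamW : lam ∈ indW H Δ y := by
    show H.subtype lam ∈ conjSub g⁻¹ Δ
    rw [mem_conjSub]
    show (g⁻¹)⁻¹ * (g⁻¹ * δ * g) * g⁻¹ ∈ Δ
    have : (g⁻¹)⁻¹ * (g⁻¹ * δ * g) * g⁻¹ = δ := by group
    rw [this]
    exact hδ
  have hfix := hz lam hlamW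
  rw [show (Quotient.mk'' h : ↥H ⧸ K) = QuotientGroup.mk h from rfl,
    MulAction.Quotient.smul_mk, smul_eq_mul, QuotientGroup.eq] at hfix
  have heq : (δ * (g * (h : G)))⁻¹ * (g * (h : G)) = (((lam * h)⁻¹ * h : ↥H) : G) := by
    push_cast [hlam]
    group
  rw [heq]
  exact Subgroup.mem_map_of_mem _ hfix

lemma map_subtype_le (H : Subgroup G) (K : Subgroup ↥H) : K.map H.subtype ≤ H := by
  rintro x ⟨k, _, rfl⟩
  exact (k : ↥H).2

lemma indF2_bijective (H Δ : Subgroup G) (K : Subgroup ↥H) :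
    Function.Bijective (indF2 H Δ K) := by
  constructor
  · rintro ⟨y, z⟩ ⟨y', z'⟩ h
    have hval := congrArg Subtype.val h
    obtain ⟨z0, hz0⟩ := z
    obtain ⟨z0', hz0'⟩ := z'
    induction z0 using Quotient.inductionOn' with
    | h h1 =>
    induction z0' using Quotient.inductionOn' with
    | h h2 =>
    simp only [indF2] at hval
    rw [show (Quotient.mk'' h1 : ↥H ⧸ K) = QuotientGroup.mk h1 from rfl,
      show (Quotient.mk'' h2 : ↥H ⧸ K) = QuotientGroup.mk h2 from rfl,
      indMap_mk, indMap_mk, QuotientGroup.eq] at hval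
    set g := Quotient.out y.val with hgdef
    set g' := Quotient.out y'.val with hgdef'
    have hyy : y = y' := by
      apply Subtype.ext
      rw [← QuotientGroup.out_eq' y.val, ← QuotientGroup.out_eq' y'.val, QuotientGroup.eq]
      have hmem := map_subtype_le H K hval
      have heq : g⁻¹ * g' = (h1 : G) * ((g * (h1 : G))⁻¹ * (g' * (h2 : G))) * ((h2 : G))⁻¹ := by
        group
      rw [← hgdef, ← hgdef', heq]
      exact H.mul_mem (H.mul_mem (h1 : ↥H).2 hmem) (H.inv_mem (h2 : ↥H).2)
    subst hyy
    have hk : h1⁻¹ * h2 ∈ K := by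
      have heq : (g * (h1 : G))⁻¹ * (g * (h2 : G)) = ((h1⁻¹ * h2 : ↥H) : G) := by
        push_cast
        group
      rw [heq] at hval
      obtain ⟨k, hkK, hkeq⟩ := hval
      have : k = h1⁻¹ * h2 := Subtype.ext hkeq
      rwa [← this]
    have hz : (QuotientGroup.mk h1 : ↥H ⧸ K) = QuotientGroup.mk h2 := QuotientGroup.eq.mpr hk
    have : (⟨Quotient.mk'' h1, hz0⟩ : FixQ (indW H Δ y) K) = ⟨Quotient.mk'' h2, hz0'⟩ :=
      Subtype.ext hz
    rw [this]
  · rintro ⟨x, hx⟩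
    set a := Quotient.out x with hadef
    have hxa : (QuotientGroup.mk a : G ⧸ K.map H.subtype) = x := QuotientGroup.out_eq' x
    have hyfix : ∀ δ ∈ Δ, δ • (QuotientGroup.mk a : G ⧸ H) = QuotientGroup.mk a := by
      intro δ hδ
      rw [MulAction.Quotient.smul_mk, smul_eq_mul, QuotientGroup.eq]
      have h1 := hx δ hδ
      rw [← hxa, MulAction.Quotient.smul_mk, smul_eq_mul, QuotientGroup.eq] at h1
      exact map_subtype_le H K h1
    set y : FixQ Δ H := ⟨QuotientGroup.mk a, hyfix⟩ with hydef
    set g := Quotient.out y.val with hgdef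
    have hga : (QuotientGroup.mk g : G ⧸ H) = QuotientGroup.mk a := QuotientGroup.out_eq' y.val
    have hmem : g⁻¹ * a ∈ H := QuotientGroup.eq.mp hga
    set h0 : ↥H := ⟨g⁻¹ * a, hmem⟩ with hh0
    have hzfix : ∀ lam ∈ indW H Δ y, lam • (QuotientGroup.mk h0 : ↥H ⧸ K) = QuotientGroup.mk h0 := by
      intro lam hlam
      rw [MulAction.Quotient.smul_mk, smul_eq_mul, QuotientGroup.eq]
      have hδ : g * (lam : G) * g⁻¹ ∈ Δ := by
        have hmem2 := hlam
        rw [indW, Subgroup.mem_comap, mem_conjSub] at hmem2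
        have hcoe : H.subtype lam = (lam : G) := rfl
        rw [hcoe] at hmem2
        have heq : (g⁻¹)⁻¹ * (lam : G) * g⁻¹ = g * (lam : G) * g⁻¹ := by group
        rwa [heq] at hmem2
      have h1 := hx (g * (lam : G) * g⁻¹) hδ
      rw [← hxa, MulAction.Quotient.smul_mk, smul_eq_mul, QuotientGroup.eq] at h1
      have heq2 : (g * (lam : G) * g⁻¹ * a)⁻¹ * a = (((lam * h0)⁻¹ * h0 : ↥H) : G) := by
        push_cast [hh0]
        group
      rw [heq2] at h1
      obtain ⟨k, hkK, hkeq⟩ := h1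
      have : k = (lam * h0)⁻¹ * h0 := Subtype.ext hkeq
      rwa [← this]
    refine ⟨⟨y, ⟨QuotientGroup.mk h0, hzfix⟩⟩, ?_⟩
    apply Subtype.ext
    show indMap H K g (QuotientGroup.mk h0) = x
    rw [indMap_mk, ← hxa]
    congr 1
    rw [hh0]
    push_cast
    group

/-- The induction decomposition as an equivalence. -/
def indEquiv (H Δ : Subgroup G) (K : Subgroup ↥H) :
    (Σ y : FixQ Δ H, FixQ (indW H Δ y) K) ≃ FixQ Δ (K.map H.subtype) :=
  Equiv.ofBijective _ (indF2_bijective H Δ K)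

end Aux5
section Aux6

set_option linter.unusedSectionVars false

variable {G : Type*} [Group G]

noncomputable instance [Finite G] (Δ Γ : Subgroup G) : Fintype (FixQ Δ Γ) :=
  Fintype.ofFinite _

lemma card_fix_map [Finite G] (H Δ : Subgroup G) (K : Subgroup ↥H) :
    Nat.card (FixQ Δ (K.map H.subtype))
      = ∑ y : FixQ Δ H, Nat.card (FixQ (indW H Δ y) K) := by
  rw [← Nat.card_congr (indEquiv H Δ K)]
  exact nat_card_sigma _

lemma conjSub_normalizer {n : G} {H : Subgroup G} (hn : n ∈ (Subgroup.normalizer (H : Set G))) :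
    conjSub n H = H := by
  ext a
  rw [mem_conjSub]
  constructor
  · intro h
    have h2 := (Subgroup.mem_normalizer_iff.mp hn (n⁻¹ * a * n)).mp
    have h3 : n * (n⁻¹ * a * n) * n⁻¹ = a := by group
    rw [h3] at h2
    exact h2 h
  · intro h
    have h2 := (Subgroup.mem_normalizer_iff.mp hn (n⁻¹ * a * n)).mpr
    have h3 : n * (n⁻¹ * a * n) * n⁻¹ = a := by group
    rw [h3] at h2
    exact h2 h

lemma mem_normalizer_of_conjSub {n : G} {H : Subgroup G} (hc : conjSub n H = H) :
    n ∈ (Subgroup.normalizer (H : Set G)) := by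
  rw [Subgroup.mem_normalizer_iff]
  intro h
  constructor
  · intro hh
    rw [← hc, mem_conjSub]
    have : n⁻¹ * (n * h * n⁻¹) * n = h := by group
    rwa [this]
  · intro hh
    rw [← hc, mem_conjSub] at hh
    have : n⁻¹ * (n * h * n⁻¹) * n = h := by group
    rwa [this] at hh

lemma conjSub_eq_of_mk_eq {H : Subgroup G} {a b : G}
    (h : (QuotientGroup.mk a : G ⧸ H) = QuotientGroup.mk b) : conjSub a H = conjSub b H := by
  have hm : a⁻¹ * b ∈ H := QuotientGroup.eq.mp h
  have : b = a * (a⁻¹ * b) := by group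
  rw [this, ← conjSub_conjSub, conjSub_mem _ hm]

lemma conjSub_out_mk {H : Subgroup G} (a : G) :
    conjSub (Quotient.out (QuotientGroup.mk a : G ⧸ H)) H = conjSub a H :=
  conjSub_eq_of_mk_eq (QuotientGroup.out_eq' _)

lemma indW_top_iff (H Δ : Subgroup G) (y : FixQ Δ H) :
    indW H Δ y = ⊤ ↔ conjSub (Quotient.out y.val) H = Δ := by
  set g := Quotient.out y.val with hg
  constructor
  · intro htop
    have hle1 : conjSub g⁻¹ Δ ≤ H := by
      intro m hm
      rw [mem_conjSub] at hm
      have h1 : g⁻¹ * (g⁻¹⁻¹ * m * g⁻¹) * g = m := by group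
      have := fix_out_conj y hm
      rw [← hg, h1] at this
      exact this
    have hle2 : H ≤ conjSub g⁻¹ Δ := by
      intro m hm
      have h2 : (⟨m, hm⟩ : ↥H) ∈ (⊤ : Subgroup ↥H) := trivial
      rw [← htop, indW, Subgroup.mem_comap] at h2
      exact h2
    have heq : conjSub g⁻¹ Δ = H := le_antisymm hle1 hle2
    rw [← heq, conjSub_conjSub, mul_inv_cancel, conjSub_one]
  · intro hc
    have heq : conjSub g⁻¹ Δ = H := by
      rw [← hc, conjSub_conjSub, inv_mul_cancel, conjSub_one]
    rw [eq_top_iff]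
    intro h _
    rw [indW, Subgroup.mem_comap, ← hg, heq]
    exact h.2

/-- The final counting set. -/
def TSet (H Δ : Subgroup G) : Type _ := {y : G ⧸ H // conjSub (Quotient.out y) H = Δ}

instance [Finite G] (H Δ : Subgroup G) : Finite (TSet H Δ) := Subtype.finite

/-- Identify the indicator subtype with `TSet`. -/
def tsetEquiv (H Δ : Subgroup G) :
    {y : FixQ Δ H // indW H Δ y = ⊤} ≃ TSet H Δ where
  toFun w := ⟨w.val.val, (indW_top_iff H Δ w.val).mp w.2⟩
  invFun w := ⟨⟨w.val, by
      intro k hk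
      rw [← QuotientGroup.out_eq' w.val, MulAction.Quotient.smul_mk, smul_eq_mul,
        QuotientGroup.eq]
      have hk2 : k ∈ conjSub (Quotient.out w.val) H := w.2.symm ▸ hk
      rw [mem_conjSub] at hk2
      have : (k * Quotient.out w.val)⁻¹ * Quotient.out w.val
          = ((Quotient.out w.val)⁻¹ * k * Quotient.out w.val)⁻¹ := by group
      rw [this]
      exact H.inv_mem hk2⟩,
    by
      exact (indW_top_iff H Δ _).mpr w.2⟩
  left_inv w := by
    apply Subtype.ext
    apply Subtype.ext
    rfl
  right_inv w := by
    apply Subtype.ext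
    rfl

lemma markMap_indF [Finite G] (H : Subgroup G) (u : BQ ↥H) (hu : IsTopIdem u)
    (d : SubgroupConj G) :
    markMap (indF H.subtype u) d = (Nat.card (TSet H d.rep) : ℚ) := by
  classical
  rw [markMap_eq, indF, map_finsuppSum]
  have step1 : ∀ c : SubgroupConj ↥H, ∀ a : ℚ,
      markLin d (Finsupp.single (Subgroup.toConj (Subgroup.map H.subtype c.rep)) a)
        = ∑ y : FixQ d.rep H, a * (Nat.card (FixQ (indW H d.rep y) c.rep) : ℚ) := by
    intro c a
    rw [markLin_single, markBasis_toConj, card_fix_map, Nat.cast_sum, Finset.mul_sum]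
  rw [Finsupp.sum_congr (g2 := fun c a =>
    ∑ y : FixQ d.rep H, a * (Nat.card (FixQ (indW H d.rep y) c.rep) : ℚ))
    (fun c _ => step1 c (u c))]
  rw [Finsupp.sum, Finset.sum_comm]
  have step2 : ∀ y : FixQ d.rep H,
      (∑ c ∈ u.support, u c * (Nat.card (FixQ (indW H d.rep y) c.rep) : ℚ))
        = (if Subgroup.toConj (indW H d.rep y)
            = Subgroup.toConj (⊤ : Subgroup ↥H) then 1 else 0) := by
    intro y
    have h1 : (∑ c ∈ u.support, u c * (Nat.card (FixQ (indW H d.rep y) c.rep) : ℚ))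
        = markMap u (Subgroup.toConj (indW H d.rep y)) := by
      rw [markMap, Finsupp.sum]
      apply Finset.sum_congr rfl
      intro c _
      rw [markBasis_toConj']
    rw [h1, hu]
  rw [Finset.sum_congr rfl (fun y _ => step2 y)]
  have step3 : ∀ y : FixQ d.rep H,
      (Subgroup.toConj (indW H d.rep y) = Subgroup.toConj (⊤ : Subgroup ↥H))
        ↔ indW H d.rep y = ⊤ := fun y => toConj_eq_top_iff
  rw [Finset.sum_congr rfl (fun y _ => by rw [if_congr (step3 y) rfl rfl])]
  rw [Finset.sum_boole]
  congr 1
  letI : Fintype (TSet H d.rep) := Fintype.ofFinite _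
  rw [Nat.card_eq_fintype_card, ← Fintype.card_congr (tsetEquiv H d.rep)]
  exact (Fintype.card_subtype _).symm

end Aux6
section Aux7

set_option linter.unusedSectionVars false

variable {G : Type*} [Group G]

lemma markMap_sub [Finite G] (x y : BQ G) (d : SubgroupConj G) :
    markMap (x - y) d = markMap x d - markMap y d := by
  rw [markMap_eq, map_sub, markMap_eq, markMap_eq]

lemma card_TSet (H Δ : Subgroup G) [Finite G] :
    Nat.card (TSet H Δ) * Nat.card (TSet H Δ) = nuG H * Nat.card (TSet H Δ) := by
  rcases isEmpty_or_nonempty (TSet H Δ) with he | hne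
  · rw [Nat.card_of_isEmpty]
    simp
  · obtain ⟨y₀⟩ := hne
    set g₀ := Quotient.out y₀.val with hg₀
    have hy₀ : conjSub g₀ H = Δ := y₀.2
    have hprop : ∀ n : ↥(Subgroup.normalizer (H : Set G)),
        conjSub (Quotient.out (QuotientGroup.mk (g₀ * (n : G)) : G ⧸ H)) H = Δ := by
      intro n
      rw [conjSub_out_mk, ← conjSub_conjSub, conjSub_normalizer n.2, hy₀]
    let f : (↥(Subgroup.normalizer (H : Set G)) ⧸ H.subgroupOf (Subgroup.normalizer (H : Set G))) → TSet H Δ := fun q =>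
      Quotient.liftOn' q (fun n => ⟨QuotientGroup.mk (g₀ * (n : G)), hprop n⟩)
        (by
          intro n n' hr
          have hmem : ((n⁻¹ * n' : ↥(Subgroup.normalizer (H : Set G))) : G) ∈ H := by
            have := QuotientGroup.leftRel_apply.mp hr
            rwa [Subgroup.mem_subgroupOf] at this
          apply Subtype.ext
          show (QuotientGroup.mk (g₀ * (n : G)) : G ⧸ H) = QuotientGroup.mk (g₀ * (n' : G))
          rw [QuotientGroup.eq]
          have heq : (g₀ * (n : G))⁻¹ * (g₀ * (n' : G)) = ((n⁻¹ * n' : ↥(Subgroup.normalizer (H : Set G))) : G) := by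
            push_cast
            group
          rw [heq]
          exact hmem)
    have hinj : Function.Injective f := by
      intro q q'
      induction q using Quotient.inductionOn' with
      | h n =>
      induction q' using Quotient.inductionOn' with
      | h n' =>
      intro h
      have hv := congrArg Subtype.val h
      have hv2 : (QuotientGroup.mk (g₀ * (n : G)) : G ⧸ H) = QuotientGroup.mk (g₀ * (n' : G)) :=
        hv
      rw [QuotientGroup.eq] at hv2
      apply Quotient.sound'
      rw [QuotientGroup.leftRel_apply, Subgroup.mem_subgroupOf]
      have heq : ((n⁻¹ * n' : ↥(Subgroup.normalizer (H : Set G))) : G) = (g₀ * (n : G))⁻¹ * (g₀ * (n' : G)) := by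
        push_cast
        group
      rw [heq]
      exact hv2
    have hsurj : Function.Surjective f := by
      rintro ⟨y, hy⟩
      have hnorm : g₀⁻¹ * Quotient.out y ∈ (Subgroup.normalizer (H : Set G)) := by
        apply mem_normalizer_of_conjSub
        rw [← conjSub_conjSub, hy, ← hy₀, conjSub_inv_conjSub]
      refine ⟨Quotient.mk'' (⟨g₀⁻¹ * Quotient.out y, hnorm⟩ : ↥(Subgroup.normalizer (H : Set G))), ?_⟩
      apply Subtype.ext
      show (QuotientGroup.mk (g₀ * (g₀⁻¹ * Quotient.out y)) : G ⧸ H) = y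
      rw [mul_inv_cancel_left]
      exact QuotientGroup.out_eq' y
    have hcard : Nat.card (TSet H Δ) = nuG H :=
      (Nat.card_congr (Equiv.ofBijective f ⟨hinj, hsurj⟩)).symm
    rw [hcard]

end Aux7
/-- If `u_H` is the primitive idempotent of `B(H) ⊗ ℚ` supported at `H`, then
`u^G_H := Ind^G_H u_H` satisfies `u^G_H · u^G_H = |N_G(H)/H| · u^G_H`. -/
theorem induced_idempotent_almost_idempotent (G : Type*) [Group G] [Finite G]
    (H : Subgroup G) (u : BQ ↥H) (hu : IsTopIdem u) :
    mulB (indF H.subtype u) (indF H.subtype u) = (nuG H : ℚ) • indF H.subtype u := by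
  have key : ∀ d, markMap (mulB (indF H.subtype u) (indF H.subtype u)
      - (nuG H : ℚ) • indF H.subtype u) d = 0 := by
    intro d
    rw [markMap_sub, markMap_mulB, markMap_smul, markMap_indF H u hu]
    have h1 := card_TSet H d.rep
    have h3 : ((Nat.card (TSet H d.rep) : ℚ)) * ((Nat.card (TSet H d.rep) : ℚ))
        = (nuG H : ℚ) * ((Nat.card (TSet H d.rep) : ℚ)) := by
      exact_mod_cast congrArg (fun n : ℕ => (n : ℚ)) h1
    rw [h3]
    ring
  exact sub_eq_zero.mp (markMap_zero_imp _ key)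

end
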